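/- Let the formation control system be a triangulated formation system induced by a triangulated Laman graph G on n ≥ 3 vertices with control laws f_{ij}(·) := u_{ij}(·, d̄_{ij}), and let p ∈ P_G be a critical point of the potential Φ such that (G,p) is a line framework lying on the first coordinate axis (all second coordinates equal zero). Let F_p be the n×n symmetric matrix with off-diagonal entries F_{p,ij} = −f_{ij}(d_{ij}) for (i,j) ∈ E and 0 for non-edges, and diagonal entries chosen so that every row sums to zero. Then F_p has at least one negative eigenvalue, i.e., N₋(F_p) ≥ 1. -/

import Mathlib

open scoped BigOperators

noncomputable section

/-- Points in the Euclidean plane. -/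
abbrev Pt : Type := EuclideanSpace ℝ (Fin 2)

/-- The flattened space of planar configurations indexed by `ι`
(two real coordinates for each vertex). -/
abbrev Conf (ι : Type*) : Type _ := EuclideanSpace ℝ (ι × Fin 2)

/-- The position of agent `i` in the configuration `p`. -/
def pt {ι : Type*} (p : Conf ι) (i : ι) : Pt := WithLp.toLp 2 (fun c => p (i, c))

/-- The sub-configuration of `p` on the vertices in `S`. -/
def restr {ι : Type*} (S : Set ι) (p : Conf ι) : Conf ↥S := WithLp.toLp 2 (fun ic => p ((ic.1 : ι), ic.2))

/-- The configuration space `P_G`: embeddings of the vertex set in the plane for which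
adjacent vertices have distinct positions. -/
def configSpace {ι : Type*} (G : SimpleGraph ι) : Set (Conf ι) :=
  {p | ∀ i j : ι, G.Adj i j → pt p i ≠ pt p j}

/-- A Henneberg sequence for a triangulated Laman graph `G`, encoded by the order
`ord` in which the vertices appear, and for every step `l ≥ 2` the two earlier steps
`par1 l`, `par2 l`, whose (adjacent) vertices the new vertex `ord l` is joined to.
The edges of `G` are exactly the initial edge together with the edges created at
each step. -/
structure Henneberg {ι : Type*} (G : SimpleGraph ι) : Type _ where
  two_le : 2 ≤ Nat.card ι
  ord : Fin (Nat.card ι) ≃ ι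
  par1 : Fin (Nat.card ι) → Fin (Nat.card ι)
  par2 : Fin (Nat.card ι) → Fin (Nat.card ι)
  par1_lt : ∀ l : Fin (Nat.card ι), 2 ≤ (l : ℕ) → par1 l < l
  par2_lt : ∀ l : Fin (Nat.card ι), 2 ≤ (l : ℕ) → par2 l < l
  par_ne : ∀ l : Fin (Nat.card ι), 2 ≤ (l : ℕ) → par1 l ≠ par2 l
  par_adj : ∀ l : Fin (Nat.card ι), 2 ≤ (l : ℕ) → G.Adj (ord (par1 l)) (ord (par2 l))
  edge_iff : ∀ i j : ι, G.Adj i j ↔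
    (s(i, j) = s(ord ⟨0, by omega⟩, ord ⟨1, by omega⟩) ∨
      ∃ l : Fin (Nat.card ι), 2 ≤ (l : ℕ) ∧
        (s(i, j) = s(ord (par1 l), ord l) ∨ s(i, j) = s(ord (par2 l), ord l)))

/-- A graph is a triangulated Laman graph if it is (essentially) a single vertex, or
it can be built by a Henneberg sequence in which each new vertex is joined to the two
endpoints of an existing edge. -/
def IsTriangulatedLaman {ι : Type*} (G : SimpleGraph ι) : Prop :=
  Nat.card ι ≤ 1 ∨ Nonempty (Henneberg G)

open Classical in
/-- The potential `Φ` induced by `G`, with control laws `f i j = u_{ij}(⬝, d̄_{ij})`: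
`Φ(p) = Σ_{(i,j) ∈ E} ∫_1^{‖x_i - x_j‖} s u_{ij}(s, d̄_{ij}) ds`
(each edge is counted once; the double sum counts it twice, whence the factor 1/2). -/
def potential {ι : Type*} [Fintype ι] (G : SimpleGraph ι) (f : ι → ι → ℝ → ℝ)
    (p : Conf ι) : ℝ :=
  (1 / 2) * ∑ i : ι, ∑ j : ι,
    if G.Adj i j then ∫ s in (1 : ℝ)..(dist (pt p i) (pt p j)), s * f i j s else 0

open Classical in
/-- The right-hand side of the formation control system
`ẋ_i = Σ_{j ∈ N_i} u_{ij}(‖x_i - x_j‖, d̄_{ij}) (x_j - x_i)`. -/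
def formationField {ι : Type*} [Fintype ι] (G : SimpleGraph ι) (f : ι → ι → ℝ → ℝ)
    (p : Conf ι) : Conf ι :=
  WithLp.toLp 2 (fun ic => ∑ j : ι,
    if G.Adj ic.1 j then f ic.1 j (dist (pt p ic.1) (pt p j)) * (p (j, ic.2) - p (ic.1, ic.2))
    else 0)

/-- A monotone attraction/repulsion function: `f` is C¹ on `ℝ_{>0}`,
`d(x f(x))/dx > 0` for `x > 0`, `f` has a unique (positive) zero, and
`∫_x^1 s f(s) ds → -∞` as `x → 0⁺`. -/
structure IsMonoAttRep (f : ℝ → ℝ) : Prop where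
  contDiff : ContDiffOn ℝ 1 f (Set.Ioi 0)
  deriv_pos : ∀ x : ℝ, 0 < x → 0 < deriv (fun y => y * f y) x
  unique_zero : ∃! x : ℝ, 0 < x ∧ f x = 0
  collision : Filter.Tendsto (fun x : ℝ => ∫ s in x..(1 : ℝ), s * f s)
    (nhdsWithin 0 (Set.Ioi 0)) Filter.atBot

/-- 2×2 rotation matrices. -/
def IsRotation (θ : Matrix (Fin 2) (Fin 2) ℝ) : Prop := θ * θ.transpose = 1 ∧ θ.det = 1

/-- The action of `γ = (θ, v) ∈ SE(2)` on configurations: `γ·p = (θ x_1 + v, …, θ x_n + v)`. -/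
def se2Act {ι : Type*} (θ : Matrix (Fin 2) (Fin 2) ℝ) (v : Pt) (p : Conf ι) : Conf ι :=
  WithLp.toLp 2 (fun ic => θ.mulVec (WithLp.ofLp (pt p ic.1)) ic.2 + v ic.2)

/-- The SE(2)-orbit `O_p` of a configuration `p`. -/
def se2Orbit {ι : Type*} (p : Conf ι) : Set (Conf ι) :=
  {q | ∃ θ v, IsRotation θ ∧ q = se2Act θ v p}

/-- Rotation by 90 degrees. -/
def rotJ : Matrix (Fin 2) (Fin 2) ℝ := !![0, -1; 1, 0]

/-- The infinitesimal rotation of a configuration. -/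
def infRot {ι : Type*} (p : Conf ι) : Conf ι := WithLp.toLp 2 (fun ic => rotJ.mulVec (WithLp.ofLp (pt p ic.1)) ic.2)

/-- The infinitesimal translation in coordinate direction `c`. -/
def transl (ι : Type*) (c : Fin 2) : Conf ι := WithLp.toLp 2 (fun ic => if ic.2 = c then 1 else 0)

/-- The tangent space at `p` of the SE(2)-orbit `O_p`. -/
def orbitTangent {ι : Type*} (p : Conf ι) : Submodule ℝ (Conf ι) :=
  Submodule.span ℝ {infRot p, transl ι 0, transl ι 1}

/-- The Hessian matrix `H_p = ∂²Φ(p)/∂p²`. -/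
def hessianMat {ι : Type*} [Fintype ι] [DecidableEq ι] (Φ : Conf ι → ℝ) (p : Conf ι) :
    Matrix (ι × Fin 2) (ι × Fin 2) ℝ :=
  Matrix.of fun a b =>
    iteratedFDeriv ℝ 2 Φ p ![EuclideanSpace.single a 1, EuclideanSpace.single b 1]

/-- The Hessian of `Φ` at `p` with respect to the coordinates of the vertices in `S`
(for `Φ` depending only on those coordinates this is the Hessian of the induced
function of the positions of the vertices in `S`). -/
def hessianMatOn {ι : Type*} [Fintype ι] [DecidableEq ι] (Φ : Conf ι → ℝ) (p : Conf ι) (S : Set ι) :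
    Matrix (↥S × Fin 2) (↥S × Fin 2) ℝ :=
  Matrix.of fun a b => hessianMat Φ p ((a.1 : ι), a.2) ((b.1 : ι), b.2)

open Classical in
/-- `N₊(A)`: the number of positive eigenvalues of a real symmetric matrix,
counted with multiplicity. -/
def nPos {m : Type*} [Finite m] (A : Matrix m m ℝ) : ℕ :=
  letI := Fintype.ofFinite m
  letI := Classical.decEq m
  if h : A.IsHermitian then Fintype.card {i // 0 < h.eigenvalues i} else 0

open Classical in
/-- `N₋(A)`: the number of negative eigenvalues of a real symmetric matrix,
counted with multiplicity. -/
def nNeg {m : Type*} [Finite m] (A : Matrix m m ℝ) : ℕ :=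
  letI := Fintype.ofFinite m
  letI := Classical.decEq m
  if h : A.IsHermitian then Fintype.card {i // h.eigenvalues i < 0} else 0

open Classical in
/-- `N₀(A)`: the number of zero eigenvalues of a real symmetric matrix,
counted with multiplicity. -/
def nZero {m : Type*} [Finite m] (A : Matrix m m ℝ) : ℕ :=
  letI := Fintype.ofFinite m
  letI := Classical.decEq m
  if h : A.IsHermitian then Fintype.card {i // h.eigenvalues i = 0} else 0

/-- `Φ` is an equivariant Morse function on `P_G`: it has finitely many critical orbits,
and each critical orbit is nondegenerate (the Hessian has exactly three zero eigenvalues). -/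
def IsEquivariantMorse {ι : Type*} [Fintype ι] [DecidableEq ι] (G : SimpleGraph ι)
    (Φ : Conf ι → ℝ) : Prop :=
  {O : Set (Conf ι) | ∃ p ∈ configSpace G, gradient Φ p = 0 ∧ O = se2Orbit p}.Finite ∧
  ∀ p ∈ configSpace G, gradient Φ p = 0 → nZero (hessianMat Φ p) = 3

/-- `i`, `j`, `k` form a 3-cycle of `G`. -/
def Is3Cycle {ι : Type*} (G : SimpleGraph ι) (i j k : ι) : Prop :=
  G.Adj i j ∧ G.Adj i k ∧ G.Adj j k

/-- A framework `(G, p)` is strongly rigid if every 3-cycle of `G` is embedded by `p`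
as a nondegenerate triangle. -/
def StronglyRigid {ι : Type*} (G : SimpleGraph ι) (p : Conf ι) : Prop :=
  ∀ i j k : ι, Is3Cycle G i j k →
    LinearIndependent ℝ ![pt p j - pt p i, pt p k - pt p i]

/-- The target distances satisfy the strict triangle inequalities associated with `G`. -/
def StrictTriangleIneqs {ι : Type*} (G : SimpleGraph ι) (dbar : ι → ι → ℝ) : Prop :=
  ∀ i j k : ι, Is3Cycle G i j k →
    dbar j k < dbar i j + dbar i k ∧ dbar i k < dbar i j + dbar j k ∧
      dbar i j < dbar i k + dbar j k

/-- A triangulated formation system: a formation control system induced by a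
triangulated Laman graph, with target distances satisfying the strict triangle
inequalities, monotone attraction/repulsion control laws vanishing at the target
distances, and whose potential is an equivariant Morse function. -/
structure IsTriFormation {ι : Type*} [Fintype ι] [DecidableEq ι] (G : SimpleGraph ι)
    (f : ι → ι → ℝ → ℝ) (dbar : ι → ι → ℝ) : Prop where
  laman : IsTriangulatedLaman G
  fsymm : ∀ i j, f i j = f j i
  dsymm : ∀ i j, dbar i j = dbar j i
  dpos : ∀ i j, G.Adj i j → 0 < dbar i j
  mono : ∀ i j, G.Adj i j → IsMonoAttRep (f i j)
  fzero : ∀ i j, G.Adj i j → f i j (dbar i j) = 0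
  triangle : StrictTriangleIneqs G dbar
  morse : IsEquivariantMorse G (potential G f)

/-- The (critical) orbit of `p` is exponentially stable: the Hessian of `Φ` at `p` has
exactly three zero eigenvalues and no negative eigenvalues (all the others positive). -/
def ExpStableAt {ι : Type*} [Fintype ι] [DecidableEq ι] (Φ : Conf ι → ℝ) (p : Conf ι) : Prop :=
  nZero (hessianMat Φ p) = 3 ∧ nNeg (hessianMat Φ p) = 0

/-- Generating relation for the independent partition: at each step `l ≥ 2` of the
Henneberg sequence in which the new vertex is aligned with its two parents, the two
new edges are related to the parent edge. -/
def triGen {ι : Type*} {G : SimpleGraph ι} (H : Henneberg G) (p : Conf ι) :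
    Sym2 ι → Sym2 ι → Prop := fun e e' =>
  ∃ l : Fin (Nat.card ι), 2 ≤ (l : ℕ) ∧
    Collinear ℝ {pt p (H.ord (H.par1 l)), pt p (H.ord (H.par2 l)), pt p (H.ord l)} ∧
    e' = s(H.ord (H.par1 l), H.ord (H.par2 l)) ∧
    (e = s(H.ord (H.par1 l), H.ord l) ∨ e = s(H.ord (H.par2 l), H.ord l))

/-- The independent partition of the edge set of `G` for the framework `(G, p)`,
computed along the Henneberg sequence `H`. -/
def indepPartition {ι : Type*} {G : SimpleGraph ι} (H : Henneberg G) (p : Conf ι) :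
    Set (Set (Sym2 ι)) :=
  {C | ∃ e ∈ G.edgeSet, C = {e' | e' ∈ G.edgeSet ∧ Relation.EqvGen (triGen H p) e e'}}

/-- The set `V_i` of vertices incident to the edges in a class `C`. -/
def classVerts {ι : Type*} (C : Set (Sym2 ι)) : Set ι := {v | ∃ e ∈ C, v ∈ e}

end

open Classical in
/-- The `n × n` symmetric zero-row-sum matrix `F_p` with off-diagonal entries
`-f_{ij}(d_{ij})` on edges and `0` on non-edges. -/
noncomputable def Fmat {ι : Type*} [Fintype ι] [DecidableEq ι] (G : SimpleGraph ι)
    (f : ι → ι → ℝ → ℝ) (p : Conf ι) : Matrix ι ι ℝ :=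
  Matrix.of fun i j =>
    if i = j then
      ∑ k ∈ Finset.univ.erase i,
        (if G.Adj i k then f i k (dist (pt p i) (pt p k)) else 0)
    else if G.Adj i j then -(f i j (dist (pt p i) (pt p j))) else 0


-- ===================== auxiliary development =====================
set_option maxHeartbeats 1000000

section AuxSpectral
open Matrix

lemma one_le_nNeg {ι : Type*} [Fintype ι] [DecidableEq ι] (A : Matrix ι ι ℝ) (hA : A.IsHermitian)
    (y : ι → ℝ) (hy : y ⬝ᵥ A.mulVec y < 0) : 1 ≤ nNeg A := by
  have e1 : Fintype.ofFinite ι = ‹Fintype ι› := Subsingleton.elim _ _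
  have e2 : Classical.decEq ι = ‹DecidableEq ι› := Subsingleton.elim _ _
  unfold nNeg
  rw [e1, e2, dif_pos hA]
  rw [Nat.one_le_iff_ne_zero, ← Nat.pos_iff_ne_zero, Fintype.card_pos_iff]
  by_contra h
  push_neg at h
  have hall : ∀ i, 0 ≤ hA.eigenvalues i := by
    intro i
    by_contra hi
    exact h.false ⟨i, by linarith⟩
  have hps := hA.posSemidef_iff_eigenvalues_nonneg.mpr hall
  have h2 := hps.dotProduct_mulVec_nonneg y
  rw [show star y = y from rfl] at h2
  linarith


lemma lap_quadform {ι : Type*} [Fintype ι] [DecidableEq ι] (w : ι → ι → ℝ)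
    (hsymm : ∀ i j, w i j = w j i) (hdiag : ∀ i, w i i = 0) (y : ι → ℝ) :
    2 * (y ⬝ᵥ (Matrix.of fun i j => if i = j then ∑ k ∈ Finset.univ.erase i, w i k else -(w i j)).mulVec y)
      = ∑ i : ι, ∑ j : ι, w i j * (y i - y j)^2 := by
  have key : ∀ i, (∑ j : ι, (Matrix.of fun i j => if i = j then ∑ k ∈ Finset.univ.erase i, w i k else -(w i j)) i j * y j)
      = ∑ j : ι, w i j * (y i - y j) := by
    intro i
    rw [← Finset.sum_erase_add _ _ (Finset.mem_univ i), ← Finset.sum_erase_add _ _ (Finset.mem_univ i)]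
    have e1 : (Matrix.of fun i j => if i = j then ∑ k ∈ Finset.univ.erase i, w i k else -(w i j)) i i * y i
        = (∑ k ∈ Finset.univ.erase i, w i k) * y i := by
      simp [Matrix.of_apply]
    rw [e1, sub_self, mul_zero, add_zero, Finset.sum_mul, ← Finset.sum_add_distrib]
    apply Finset.sum_congr rfl
    intro j hj
    have hne : ¬ (i = j) := fun h => (Finset.mem_erase.mp hj).1 h.symm
    simp only [Matrix.of_apply, if_neg hne]
    ring
  have hdot : y ⬝ᵥ (Matrix.of fun i j => if i = j then ∑ k ∈ Finset.univ.erase i, w i k else -(w i j)).mulVec y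
      = ∑ i : ι, ∑ j : ι, w i j * (y i * (y i - y j)) := by
    unfold dotProduct Matrix.mulVec dotProduct
    apply Finset.sum_congr rfl
    intro i _
    rw [key i, Finset.mul_sum]
    apply Finset.sum_congr rfl
    intro j _
    ring
  rw [hdot, two_mul]
  have swap : ∑ i : ι, ∑ j : ι, w i j * (y i * (y i - y j))
      = ∑ i : ι, ∑ j : ι, w i j * (y j * (y j - y i)) := by
    rw [Finset.sum_comm]
    apply Finset.sum_congr rfl; intro j _
    apply Finset.sum_congr rfl; intro i _
    rw [hsymm i j]
  nth_rewrite 2 [swap]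
  rw [← Finset.sum_add_distrib]
  apply Finset.sum_congr rfl; intro i _
  rw [← Finset.sum_add_distrib]
  apply Finset.sum_congr rfl; intro j _
  ring


end AuxSpectral



lemma sign_mono (f : ℝ → ℝ) (hcd : ContDiffOn ℝ 1 f (Set.Ioi 0))
    (hderiv : ∀ x : ℝ, 0 < x → 0 < deriv (fun y => y * f y) x)
    (dbar : ℝ) (hdbar : 0 < dbar) (hz : f dbar = 0) (d : ℝ) (hd : 0 < d) :
    (0 ≤ f d → dbar ≤ d) ∧ (f d ≤ 0 → d ≤ dbar) := by
  have hcont : ContinuousOn (fun y => y * f y) (Set.Ioi 0) :=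
    continuousOn_id.mul hcd.continuousOn
  have hsm : StrictMonoOn (fun y => y * f y) (Set.Ioi 0) := by
    apply strictMonoOn_of_deriv_pos (convex_Ioi 0) hcont
    intro x hx
    rw [interior_Ioi] at hx
    exact hderiv x hx
  constructor
  · intro h0
    by_contra hlt
    push_neg at hlt
    have h1 := hsm (Set.mem_Ioi.mpr hd) (Set.mem_Ioi.mpr hdbar) hlt
    simp only at h1
    rw [hz, mul_zero] at h1
    nlinarith [mul_nonneg hd.le h0]
  · intro h0
    by_contra hlt
    push_neg at hlt
    have h1 := hsm (Set.mem_Ioi.mpr hdbar) (Set.mem_Ioi.mpr hd) hlt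
    simp only at h1
    rw [hz, mul_zero] at h1
    nlinarith [mul_nonpos_of_nonneg_of_nonpos hd.le h0]


section AuxComb
open Finset

/-- unordered pair equality -/
def npair (i j a b : ℕ) : Prop := (i = a ∧ j = b) ∨ (i = b ∧ j = a)

/-- adjacency in the Henneberg-built graph on `{0,…,n-1}` -/
def NAdj (n : ℕ) (p1 p2 : ℕ → ℕ) (i j : ℕ) : Prop :=
  npair i j 0 1 ∨ ∃ l, 2 ≤ l ∧ l < n ∧ (npair i j (p1 l) l ∨ npair i j (p2 l) l)

lemma npair_symm {i j a b : ℕ} (h : npair i j a b) : npair j i a b := by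
  rcases h with ⟨h1,h2⟩|⟨h1,h2⟩
  · exact Or.inr ⟨h2,h1⟩
  · exact Or.inl ⟨h2,h1⟩

lemma NAdj_symm {n p1 p2 i j} (h : NAdj n p1 p2 i j) : NAdj n p1 p2 j i := by
  rcases h with h | ⟨l, h1, h2, h3 | h3⟩
  · exact Or.inl (npair_symm h)
  · exact Or.inr ⟨l, h1, h2, Or.inl (npair_symm h3)⟩
  · exact Or.inr ⟨l, h1, h2, Or.inr (npair_symm h3)⟩

lemma NAdj_ne {n p1 p2 i j} (hp1 : ∀ l, 2 ≤ l → l < n → p1 l < l)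
    (hp2 : ∀ l, 2 ≤ l → l < n → p2 l < l) (h : NAdj n p1 p2 i j) : i ≠ j := by
  rcases h with h | ⟨l, h1, h2, h3 | h3⟩ <;>
    [skip; have := hp1 l h1 h2; have := hp2 l h1 h2] <;>
    rcases ‹npair _ _ _ _› with ⟨e1,e2⟩|⟨e1,e2⟩ <;> omega

lemma NAdj_lt {n p1 p2 i j} (hn : 2 ≤ n) (hp1 : ∀ l, 2 ≤ l → l < n → p1 l < l)
    (hp2 : ∀ l, 2 ≤ l → l < n → p2 l < l) (h : NAdj n p1 p2 i j) : i < n ∧ j < n := by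
  rcases h with h | ⟨l, h1, h2, h3 | h3⟩ <;>
    [skip; have := hp1 l h1 h2; have := hp2 l h1 h2] <;>
    rcases ‹npair _ _ _ _› with ⟨e1,e2⟩|⟨e1,e2⟩ <;> omega

lemma NAdj_mono {n m p1 p2 i j} (hnm : n ≤ m) (h : NAdj n p1 p2 i j) : NAdj m p1 p2 i j := by
  rcases h with h | ⟨l, h1, h2, h3⟩
  · exact Or.inl h
  · exact Or.inr ⟨l, h1, by omega, h3⟩

lemma NAdj_restrict {m p1 p2 i j} (hi : i < m) (hj : j < m)
    (h : NAdj (m+1) p1 p2 i j) : NAdj m p1 p2 i j := by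
  rcases h with h | ⟨l, h1, h2, h3⟩
  · exact Or.inl h
  · refine Or.inr ⟨l, h1, ?_, h3⟩
    rcases Nat.lt_or_ge l m with h4 | h4
    · exact h4
    · exfalso
      have hl : l = m := by omega
      rcases h3 with ⟨e1,e2⟩|⟨e1,e2⟩|⟨e1,e2⟩|⟨e1,e2⟩ <;> omega

lemma NAdj_last {m p1 p2 j} (hm : 2 ≤ m)
    (hp1 : ∀ l, 2 ≤ l → l < m+1 → p1 l < l) (hp2 : ∀ l, 2 ≤ l → l < m+1 → p2 l < l)
    (h : NAdj (m+1) p1 p2 m j) : j = p1 m ∨ j = p2 m := by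
  rcases h with h | ⟨l, h1, h2, h3⟩
  · rcases h with ⟨e1,e2⟩|⟨e1,e2⟩ <;> omega
  · rcases Nat.lt_or_ge l m with h4 | h4
    · exfalso
      have g1 := hp1 l h1 (by omega)
      have g2 := hp2 l h1 (by omega)
      rcases h3 with ⟨e1,e2⟩|⟨e1,e2⟩|⟨e1,e2⟩|⟨e1,e2⟩ <;> omega
    · have hl : l = m := by omega
      subst hl
      have g1 := hp1 l h1 h2
      have g2 := hp2 l h1 h2
      rcases h3 with ⟨e1,e2⟩|⟨e1,e2⟩|⟨e1,e2⟩|⟨e1,e2⟩ <;> omega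

lemma patch_sum (m : ℕ) (a b : ℕ) (ha : a < m) (hb : b < m) (hab : a ≠ b) (c : ℝ) (y : ℕ → ℝ) :
    ∑ i ∈ range m, ∑ j ∈ range m,
      (if (i = a ∧ j = b) ∨ (i = b ∧ j = a) then c else 0) * (y i - y j)^2
      = 2 * c * (y a - y b)^2 := by
  have inner : ∀ i, i ∈ range m → (∑ j ∈ range m,
      (if (i = a ∧ j = b) ∨ (i = b ∧ j = a) then c else 0) * (y i - y j)^2)
      = (if i = a then c * (y a - y b)^2 else 0) + (if i = b then c * (y b - y a)^2 else 0) := by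
    intro i _
    by_cases hia : i = a
    · rw [if_pos hia, if_neg (show i ≠ b from fun h => hab (hia.symm.trans h)), add_zero]
      have step : ∀ j, ((if (i = a ∧ j = b) ∨ (i = b ∧ j = a) then c else 0) * (y i - y j)^2)
          = if j = b then c * (y i - y j)^2 else 0 := by
        intro j
        by_cases hj : j = b
        · rw [if_pos (Or.inl ⟨hia, hj⟩), if_pos hj]
        · rw [if_neg, if_neg hj, zero_mul]
          rintro (⟨-, h2⟩|⟨h1, -⟩)
          · exact hj h2
          · exact hab (hia.symm.trans h1)
      rw [Finset.sum_congr rfl (fun j _ => step j), Finset.sum_ite_eq' (range m) b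
        (fun j => c * (y i - y j)^2), if_pos (mem_range.mpr hb), hia]
    · by_cases hib : i = b
      · rw [if_neg hia, if_pos hib, zero_add]
        have step : ∀ j, ((if (i = a ∧ j = b) ∨ (i = b ∧ j = a) then c else 0) * (y i - y j)^2)
            = if j = a then c * (y i - y j)^2 else 0 := by
          intro j
          by_cases hj : j = a
          · rw [if_pos (Or.inr ⟨hib, hj⟩), if_pos hj]
          · rw [if_neg, if_neg hj, zero_mul]
            rintro (⟨h1, -⟩|⟨-, h2⟩)
            · exact hia h1
            · exact hj h2
        rw [Finset.sum_congr rfl (fun j _ => step j), Finset.sum_ite_eq' (range m) a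
          (fun j => c * (y i - y j)^2), if_pos (mem_range.mpr ha), hib]
      · rw [if_neg hia, if_neg hib, add_zero]
        apply Finset.sum_eq_zero
        intro j _
        rw [if_neg, zero_mul]
        rintro (⟨h1, -⟩|⟨h1, -⟩)
        · exact hia h1
        · exact hib h1
  rw [Finset.sum_congr rfl inner, Finset.sum_add_distrib,
    Finset.sum_ite_eq' (range m) a _, Finset.sum_ite_eq' (range m) b _,
    if_pos (mem_range.mpr ha), if_pos (mem_range.mpr hb)]
  ring

lemma Q_split (m : ℕ) (w : ℕ → ℕ → ℝ) (hsymm : ∀ i j, w i j = w j i)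
    (a b : ℕ) (ha : a < m) (hb : b < m) (hab : a ≠ b)
    (hz : ∀ j, j < m + 1 → j ≠ a → j ≠ b → w m j = 0) (c : ℝ) (y : ℕ → ℝ) :
    ∑ i ∈ range (m+1), ∑ j ∈ range (m+1), w i j * (y i - y j)^2
      = (∑ i ∈ range m, ∑ j ∈ range m,
          (w i j + if (i = a ∧ j = b) ∨ (i = b ∧ j = a) then c else 0) * (y i - y j)^2)
        + 2 * (w m a * (y m - y a)^2) + 2 * (w m b * (y m - y b)^2)
        - 2 * c * (y a - y b)^2 := by
  have crossrow : ∀ (g : ℕ → ℝ), (∀ j, j < m → j ≠ a → j ≠ b → g j = 0) →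
      ∑ j ∈ range m, g j = g a + g b := by
    intro g hg
    have hsub : ({a, b} : Finset ℕ) ⊆ range m := by
      intro t ht
      rcases Finset.mem_insert.mp ht with rfl | ht
      · exact mem_range.mpr ha
      · rw [Finset.mem_singleton.mp ht]; exact mem_range.mpr hb
    rw [← Finset.sum_subset hsub]
    · rw [Finset.sum_pair hab]
    · intro t ht hnt
      have h1 : t ≠ a := fun h => hnt (by simp [h])
      have h2 : t ≠ b := fun h => hnt (by simp [h])
      exact hg t (mem_range.mp ht) h1 h2
  rw [Finset.sum_range_succ]
  have inner1 : ∀ i, i ∈ range m → ∑ j ∈ range (m+1), w i j * (y i - y j)^2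
      = (∑ j ∈ range m, w i j * (y i - y j)^2) + w i m * (y i - y m)^2 := by
    intro i _
    rw [Finset.sum_range_succ]
  rw [Finset.sum_congr rfl inner1, Finset.sum_add_distrib]
  have cross1 : ∑ i ∈ range m, w i m * (y i - y m)^2 = w a m * (y a - y m)^2 + w b m * (y b - y m)^2 := by
    apply crossrow
    intro j hj hja hjb
    rw [hsymm, hz j (by omega) hja hjb, zero_mul]
  have cross2 : ∑ j ∈ range (m+1), w m j * (y m - y j)^2
      = w m a * (y m - y a)^2 + w m b * (y m - y b)^2 := by
    rw [Finset.sum_range_succ, hz m (by omega) (by omega) (by omega), zero_mul, add_zero]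
    apply crossrow
    intro j hj hja hjb
    rw [hz j (by omega) hja hjb, zero_mul]
  rw [cross1, cross2]
  have main : ∑ i ∈ range m, ∑ j ∈ range m, w i j * (y i - y j)^2
      = (∑ i ∈ range m, ∑ j ∈ range m,
          (w i j + if (i = a ∧ j = b) ∨ (i = b ∧ j = a) then c else 0) * (y i - y j)^2)
        - 2 * c * (y a - y b)^2 := by
    rw [← patch_sum m a b ha hb hab c y]
    rw [← Finset.sum_sub_distrib]
    apply Finset.sum_congr rfl
    intro i _
    rw [← Finset.sum_sub_distrib]
    apply Finset.sum_congr rfl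
    intro j _
    ring
  rw [main, hsymm a m, hsymm b m]
  ring_nf

theorem lemC : ∀ (n : ℕ), 2 ≤ n → ∀ (p1 p2 : ℕ → ℕ),
    (∀ l, 2 ≤ l → l < n → p1 l < l) → (∀ l, 2 ≤ l → l < n → p2 l < l) →
    (∀ l, 2 ≤ l → l < n → p1 l ≠ p2 l) →
    (∀ l, 2 ≤ l → l < n → NAdj n p1 p2 (p1 l) (p2 l)) →
    ∀ (x : ℕ → ℝ) (w : ℕ → ℕ → ℝ),
    (∀ i j, w i j = w j i) →
    (∀ i j, i < n → j < n → ¬ NAdj n p1 p2 i j → w i j = 0) →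
    (∀ i j, NAdj n p1 p2 i j → x i ≠ x j) →
    (∀ i, i < n → ∑ j ∈ Finset.range n, w i j * (x j - x i) = 0) →
    (∀ i j k, NAdj n p1 p2 i j → NAdj n p1 p2 i k → NAdj n p1 p2 j k →
       x i < x k → x k < x j → (w i k < 0 ∨ w k j < 0 ∨ 0 < w i j)) →
    (∃ i j, i < n ∧ j < n ∧ w i j ≠ 0) →
    ∃ y : ℕ → ℝ, ∑ i ∈ Finset.range n, ∑ j ∈ Finset.range n, w i j * (y i - y j)^2 < 0 := by
  intro n
  induction n using Nat.strong_induction_on with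
  | _ n ih =>
  intro hn p1 p2 hp1 hp2 hpne hpadj x w hsymm hsupp hx heq hT hnz
  rcases Nat.lt_or_ge n 3 with hn3 | hn3
  · -- base case n = 2 : contradiction
    exfalso
    have hn2 : n = 2 := by omega
    subst hn2
    obtain ⟨i, j, hi, hj, hw⟩ := hnz
    have hadj : NAdj 2 p1 p2 i j := by
      by_contra h
      exact hw (hsupp i j hi hj h)
    have hij : npair i j 0 1 := by
      rcases hadj with h | ⟨l, h1, h2, _⟩
      · exact h
      · omega
    have h01 : NAdj 2 p1 p2 0 1 := Or.inl (Or.inl ⟨rfl, rfl⟩)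
    have hx01 : x 0 ≠ x 1 := hx 0 1 h01
    have h00 : w 0 0 = 0 := by
      apply hsupp 0 0 (by omega) (by omega)
      intro h
      exact NAdj_ne hp1 hp2 h rfl
    have heq0 := heq 0 (by omega)
    rw [Finset.sum_range_succ, Finset.sum_range_succ, Finset.sum_range_zero, zero_add, h00,
      zero_mul, zero_add] at heq0
    have hw01 : w 0 1 = 0 := by
      rcases mul_eq_zero.mp heq0 with h | h
      · exact h
      · exfalso; apply hx01; linarith [sub_eq_zero.mp h]
    rcases hij with ⟨e1, e2⟩ | ⟨e1, e2⟩
    · rw [e1, e2] at hw; exact hw hw01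
    · rw [e1, e2, hsymm] at hw; exact hw hw01
  · -- inductive step
    obtain ⟨m, rfl⟩ : ∃ m, n = m + 1 := ⟨n - 1, by omega⟩
    have hm : 2 ≤ m := by omega
    have ha0 : p1 m < m := hp1 m hm (by omega)
    have hb0 : p2 m < m := hp2 m hm (by omega)
    have hne0 : p1 m ≠ p2 m := hpne m hm (by omega)
    have hADab0 : NAdj (m+1) p1 p2 (p1 m) (p2 m) := hpadj m hm (by omega)
    have hza0 : NAdj (m+1) p1 p2 m (p1 m) :=
      Or.inr ⟨m, hm, by omega, Or.inl (Or.inr ⟨rfl, rfl⟩)⟩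
    have hzb0 : NAdj (m+1) p1 p2 m (p2 m) :=
      Or.inr ⟨m, hm, by omega, Or.inr (Or.inr ⟨rfl, rfl⟩)⟩
    have hnbr0 : ∀ j, NAdj (m+1) p1 p2 m j → j = p1 m ∨ j = p2 m := fun j h =>
      NAdj_last hm hp1 hp2 h
    obtain ⟨a, b, ha, hb, hab, hADab, hza, hzb, hnbr, hxab⟩ :
        ∃ a b, a < m ∧ b < m ∧ a ≠ b ∧ NAdj (m+1) p1 p2 a b ∧ NAdj (m+1) p1 p2 m a ∧
          NAdj (m+1) p1 p2 m b ∧ (∀ j, NAdj (m+1) p1 p2 m j → j = a ∨ j = b) ∧ x a < x b := by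
      rcases lt_or_gt_of_ne (hx _ _ hADab0) with h | h
      · exact ⟨p1 m, p2 m, ha0, hb0, hne0, hADab0, hza0, hzb0, hnbr0, h⟩
      · exact ⟨p2 m, p1 m, hb0, ha0, hne0.symm, NAdj_symm hADab0, hzb0, hza0,
          fun j hj => (hnbr0 j hj).symm, h⟩
    set α := w m a with hαdef
    set β := w m b with hβdef
    have hzsupp : ∀ j, j < m + 1 → j ≠ a → j ≠ b → w m j = 0 := by
      intro j hj hja hjb
      apply hsupp m j (by omega) hj
      intro hAD
      rcases hnbr j hAD with h | h
      · exact hja h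
      · exact hjb h
    have heqz : α * (x a - x m) + β * (x b - x m) = 0 := by
      have h0 := heq m (by omega)
      have hsub : ({a, b} : Finset ℕ) ⊆ range (m+1) := by
        intro t ht
        rcases Finset.mem_insert.mp ht with rfl | ht
        · exact mem_range.mpr (by omega)
        · rw [Finset.mem_singleton.mp ht]; exact mem_range.mpr (by omega)
      rw [← Finset.sum_subset hsub] at h0
      · rw [Finset.sum_pair hab] at h0
        linarith
      · intro t ht hnt
        have h1 : t ≠ a := fun h => hnt (by simp [h])
        have h2 : t ≠ b := fun h => hnt (by simp [h])
        rw [hzsupp t (mem_range.mp ht) h1 h2, zero_mul]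
    -- x-coordinate facts
    have hxma : x m ≠ x a := hx m a hza
    have hxmb : x m ≠ x b := hx m b hzb
    -- indicator branch
    have hdone : α + β < 0 →
        ∃ y : ℕ → ℝ, ∑ i ∈ Finset.range (m+1), ∑ j ∈ Finset.range (m+1),
          w i j * (y i - y j)^2 < 0 := by
      intro hneg
      set y : ℕ → ℝ := fun i => if i = m then 1 else 0 with hydef
      refine ⟨y, ?_⟩
      rw [Q_split m w hsymm a b ha hb hab hzsupp 0 y]
      have h1 : ∑ i ∈ range m, ∑ j ∈ range m,
          (w i j + if (i = a ∧ j = b) ∨ (i = b ∧ j = a) then (0:ℝ) else 0) * (y i - y j)^2 = 0 := by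
        apply Finset.sum_eq_zero
        intro i hi
        apply Finset.sum_eq_zero
        intro j hj
        have : y i = 0 := if_neg (by have := mem_range.mp hi; omega)
        have hyj : y j = 0 := if_neg (by have := mem_range.mp hj; omega)
        rw [this, hyj]
        ring
      have hym : y m = 1 := if_pos rfl
      have hya : y a = 0 := if_neg (by omega)
      have hyb : y b = 0 := if_neg (by omega)
      rw [h1, hym, hya, hyb]
      ring_nf
      linarith
    -- reduction branch
    have hreduce : ∀ c : ℝ,
        (c * (x b - x a) = α * (x m - x a)) →
        (c * (x a - x b) = β * (x m - x b)) →
        ((w a b < 0 ∧ w a b + c < 0) ∨ (0 < w a b ∧ 0 < w a b + c)) →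
        (∀ ya yb : ℝ, ∃ yz : ℝ, α * (yz - ya)^2 + β * (yz - yb)^2 = c * (ya - yb)^2) →
        ∃ y : ℕ → ℝ, ∑ i ∈ Finset.range (m+1), ∑ j ∈ Finset.range (m+1),
          w i j * (y i - y j)^2 < 0 := by
      intro c hca hcb hsign hbr
      set w' : ℕ → ℕ → ℝ :=
        fun i j => w i j + if (i = a ∧ j = b) ∨ (i = b ∧ j = a) then c else 0 with hw'def
      have hw'ab : w' a b = w a b + c := by
        simp only [hw'def]
        simp
      have hw'off : ∀ i j, ¬((i = a ∧ j = b) ∨ (i = b ∧ j = a)) → w' i j = w i j := by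
        intro i j h
        simp only [hw'def]
        rw [if_neg h, add_zero]
      have hw'symm : ∀ i j, w' i j = w' j i := by
        intro i j
        simp only [hw'def]
        rw [hsymm]
        congr 1
        by_cases h : (i = a ∧ j = b) ∨ (i = b ∧ j = a)
        · rw [if_pos h, if_pos (by tauto)]
        · rw [if_neg h, if_neg (by tauto)]
      have hmab : NAdj m p1 p2 a b := NAdj_restrict ha hb hADab
      have hNm : ∀ i j, NAdj m p1 p2 i j → NAdj (m+1) p1 p2 i j := fun i j h =>
        NAdj_mono (by omega) h
      have hp1' : ∀ l, 2 ≤ l → l < m → p1 l < l := fun l h1 h2 => hp1 l h1 (by omega)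
      have hp2' : ∀ l, 2 ≤ l → l < m → p2 l < l := fun l h1 h2 => hp2 l h1 (by omega)
      have hpne' : ∀ l, 2 ≤ l → l < m → p1 l ≠ p2 l := fun l h1 h2 => hpne l h1 (by omega)
      have hpadj' : ∀ l, 2 ≤ l → l < m → NAdj m p1 p2 (p1 l) (p2 l) := fun l h1 h2 =>
        NAdj_restrict (by have := hp1 l h1 (by omega); omega)
          (by have := hp2 l h1 (by omega); omega) (hpadj l h1 (by omega))
      have hsupp' : ∀ i j, i < m → j < m → ¬ NAdj m p1 p2 i j → w' i j = 0 := by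
        intro i j hi hj hN
        rw [hw'off i j ?_]
        · exact hsupp i j (by omega) (by omega) (fun h => hN (NAdj_restrict hi hj h))
        · rintro (⟨h1, h2⟩ | ⟨h1, h2⟩)
          · rw [h1, h2] at hN; exact hN hmab
          · rw [h1, h2] at hN; exact hN (NAdj_symm hmab)
      have hx' : ∀ i j, NAdj m p1 p2 i j → x i ≠ x j := fun i j h => hx i j (hNm i j h)
      have heq' : ∀ i, i < m → ∑ j ∈ Finset.range m, w' i j * (x j - x i) = 0 := by
        intro i hi
        have h0 := heq i (by omega)
        rw [Finset.sum_range_succ] at h0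
        have hsplit : ∑ j ∈ Finset.range m, w' i j * (x j - x i)
            = (∑ j ∈ Finset.range m, w i j * (x j - x i))
              + ∑ j ∈ Finset.range m, (if (i = a ∧ j = b) ∨ (i = b ∧ j = a) then c else 0)
                  * (x j - x i) := by
          rw [← Finset.sum_add_distrib]
          apply Finset.sum_congr rfl
          intro j _
          simp only [hw'def]
          ring
        rw [hsplit]
        by_cases hia : i = a
        · have hpatch : ∑ j ∈ Finset.range m,
              (if (i = a ∧ j = b) ∨ (i = b ∧ j = a) then c else 0) * (x j - x i)
              = c * (x b - x i) := by
            have step : ∀ j, ((if (i = a ∧ j = b) ∨ (i = b ∧ j = a) then c else 0) * (x j - x i))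
                = if j = b then c * (x j - x i) else 0 := by
              intro j
              by_cases hj : j = b
              · rw [if_pos (Or.inl ⟨hia, hj⟩), if_pos hj]
              · rw [if_neg, if_neg hj, zero_mul]
                rintro (⟨-, h2⟩ | ⟨h1, -⟩)
                · exact hj h2
                · exact hab (hia.symm.trans h1)
            rw [Finset.sum_congr rfl (fun j _ => step j),
              Finset.sum_ite_eq' (range m) b (fun j => c * (x j - x i)),
              if_pos (mem_range.mpr hb)]
          rw [hpatch]
          have hwim : w i m = α := by rw [hia, hsymm]
          rw [hia] at h0 ⊢
          have hwam : w a m = α := by rw [hsymm]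
          rw [hwam] at h0
          nlinarith [hca, h0]
        · by_cases hib : i = b
          · have hpatch : ∑ j ∈ Finset.range m,
                (if (i = a ∧ j = b) ∨ (i = b ∧ j = a) then c else 0) * (x j - x i)
                = c * (x a - x i) := by
              have step : ∀ j, ((if (i = a ∧ j = b) ∨ (i = b ∧ j = a) then c else 0) * (x j - x i))
                  = if j = a then c * (x j - x i) else 0 := by
                intro j
                by_cases hj : j = a
                · rw [if_pos (Or.inr ⟨hib, hj⟩), if_pos hj]
                · rw [if_neg, if_neg hj, zero_mul]
                  rintro (⟨h1, -⟩ | ⟨-, h2⟩)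
                  · exact hab (h1.symm.trans hib)
                  · exact hj h2
              rw [Finset.sum_congr rfl (fun j _ => step j),
                Finset.sum_ite_eq' (range m) a (fun j => c * (x j - x i)),
                if_pos (mem_range.mpr ha)]
            rw [hpatch]
            rw [hib] at h0 ⊢
            have hwbm : w b m = β := by rw [hsymm]
            rw [hwbm] at h0
            nlinarith [hcb, h0]
          · have hpatch : ∑ j ∈ Finset.range m,
                (if (i = a ∧ j = b) ∨ (i = b ∧ j = a) then c else 0) * (x j - x i) = 0 := by
              apply Finset.sum_eq_zero
              intro j _
              rw [if_neg, zero_mul]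
              rintro (⟨h1, -⟩ | ⟨h1, -⟩)
              · exact hia h1
              · exact hib h1
            rw [hpatch, add_zero]
            have hwim : w i m = 0 := by rw [hsymm]; exact hzsupp i (by omega) hia hib
            rw [hwim, zero_mul, add_zero] at h0
            exact h0
      have hT' : ∀ i j k, NAdj m p1 p2 i j → NAdj m p1 p2 i k → NAdj m p1 p2 j k →
          x i < x k → x k < x j → (w' i k < 0 ∨ w' k j < 0 ∨ 0 < w' i j) := by
        intro i j k h1 h2 h3 h4 h5
        have hval : ∀ u v : ℕ, w' u v = w u v ∨
            (w u v = w a b ∧ w' u v = w a b + c) := by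
          intro u v
          by_cases h : (u = a ∧ v = b) ∨ (u = b ∧ v = a)
          · right
            rcases h with ⟨e1, e2⟩ | ⟨e1, e2⟩
            · constructor
              · rw [e1, e2]
              · rw [e1, e2, hw'ab]
            · constructor
              · rw [e1, e2, hsymm]
              · rw [e1, e2, ← hw'ab, hw'symm]
          · left; exact hw'off u v h
        rcases hT i j k (hNm _ _ h1) (hNm _ _ h2) (hNm _ _ h3) h4 h5 with h | h | h
        · left
          rcases hval i k with he | ⟨he1, he2⟩
          · rw [he]; exact h
          · rw [he2]
            rcases hsign with ⟨_, hs⟩ | ⟨hs, _⟩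
            · exact hs
            · exfalso; rw [he1] at h; linarith
        · right; left
          rcases hval k j with he | ⟨he1, he2⟩
          · rw [he]; exact h
          · rw [he2]
            rcases hsign with ⟨_, hs⟩ | ⟨hs, _⟩
            · exact hs
            · exfalso; rw [he1] at h; linarith
        · right; right
          rcases hval i j with he | ⟨he1, he2⟩
          · rw [he]; exact h
          · rw [he2]
            rcases hsign with ⟨hs, _⟩ | ⟨_, hs⟩
            · exfalso; rw [he1] at h; linarith
            · exact hs
      have hnz' : ∃ i j, i < m ∧ j < m ∧ w' i j ≠ 0 := by
        refine ⟨a, b, ha, hb, ?_⟩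
        rw [hw'ab]
        rcases hsign with ⟨_, hs⟩ | ⟨_, hs⟩
        · linarith
        · linarith
      obtain ⟨y', hy'⟩ := ih m (by omega) hm p1 p2 hp1' hp2' hpne' hpadj' x w' hw'symm hsupp'
        hx' heq' hT' hnz'
      obtain ⟨yz, hyz⟩ := hbr (y' a) (y' b)
      set y : ℕ → ℝ := Function.update y' m yz with hydef
      refine ⟨y, ?_⟩
      rw [Q_split m w hsymm a b ha hb hab hzsupp c y]
      have hyi : ∀ i, i < m → y i = y' i := by
        intro i hi
        simp only [hydef]
        exact Function.update_of_ne (by omega) _ _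
      have hym : y m = yz := Function.update_self m yz y'
      have hmain : ∑ i ∈ range m, ∑ j ∈ range m,
          (w i j + if (i = a ∧ j = b) ∨ (i = b ∧ j = a) then c else 0) * (y i - y j)^2
          = ∑ i ∈ range m, ∑ j ∈ range m, w' i j * (y' i - y' j)^2 := by
        apply Finset.sum_congr rfl
        intro i hi
        apply Finset.sum_congr rfl
        intro j hj
        rw [hyi i (mem_range.mp hi), hyi j (mem_range.mp hj)]
      rw [hmain, hym, hyi a ha, hyi b hb]
      have hbr2 : α * (yz - y' a)^2 + β * (yz - y' b)^2 = c * (y' a - y' b)^2 := hyz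
      linarith [hy', hbr2]
    -- trichotomy on the position of x m
    rcases lt_trichotomy (x m) (x a) with hc1 | hc1 | hc1
    · -- z leftmost : x m < x a < x b
      have key : (α + β) * (x b - x m) = α * (x b - x a) := by linear_combination heqz
      rcases lt_trichotomy α 0 with hα | hα | hα
      · apply hdone
        nlinarith [key]
      · -- α = 0 ⇒ β = 0
        have hβ0 : β = 0 := by
          rw [hα] at heqz
          rcases mul_eq_zero.mp (by linarith : β * (x b - x m) = 0) with h | h
          · exact h
          · exfalso; nlinarith
        have hwab : w a b < 0 := by
          rcases hT m b a hzb hza (NAdj_symm hADab) hc1 hxab with h | h | h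
          · exfalso; rw [← hαdef] at h; linarith
          · exact h
          · exfalso; rw [← hβdef] at h; linarith
        apply hreduce 0
        · rw [hα]; ring
        · rw [hβ0]; ring
        · exact Or.inl ⟨hwab, by linarith⟩
        · intro ya yb; exact ⟨ya, by rw [hα, hβ0]; ring⟩
      · -- α > 0, β < 0
        have hβ : β < 0 := by nlinarith [heqz]
        have hd : 0 < α + β := by nlinarith [key]
        have hwab : w a b < 0 := by
          rcases hT m b a hzb hza (NAdj_symm hADab) hc1 hxab with h | h | h
          · exfalso; rw [← hαdef] at h; linarith
          · exact h
          · exfalso; rw [← hβdef] at h; linarith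
        have hcneg : α * β / (α + β) < 0 :=
          div_neg_of_neg_of_pos (mul_neg_of_pos_of_neg hα hβ) hd
        apply hreduce (α * β / (α + β))
        · rw [div_mul_eq_mul_div, div_eq_iff hd.ne']
          linear_combination α * heqz
        · rw [div_mul_eq_mul_div, div_eq_iff hd.ne']
          linear_combination β * heqz
        · exact Or.inl ⟨hwab, by linarith⟩
        · intro ya yb
          refine ⟨(α * ya + β * yb) / (α + β), ?_⟩
          field_simp
          ring
    · exact absurd hc1 hxma
    · rcases lt_trichotomy (x m) (x b) with hc2 | hc2 | hc2
      · -- middle : x a < x m < x b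
        rcases lt_trichotomy α 0 with hα | hα | hα
        · apply hdone
          have hβ : β < 0 := by nlinarith [heqz]
          linarith
        · have hβ0 : β = 0 := by
            rw [hα] at heqz
            rcases mul_eq_zero.mp (by linarith : β * (x b - x m) = 0) with h | h
            · exact h
            · exfalso; nlinarith
          have hwab : 0 < w a b := by
            rcases hT a b m hADab (NAdj_symm hza) (NAdj_symm hzb) hc1 hc2 with h | h | h
            · exfalso; rw [hsymm] at h; rw [← hαdef] at h; linarith
            · exfalso; rw [← hβdef] at h; linarith
            · exact h
          apply hreduce 0
          · rw [hα]; ring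
          · rw [hβ0]; ring
          · exact Or.inr ⟨hwab, by linarith⟩
          · intro ya yb; exact ⟨ya, by rw [hα, hβ0]; ring⟩
        · have hβ : 0 < β := by nlinarith [heqz]
          have hd : 0 < α + β := by linarith
          have hwab : 0 < w a b := by
            rcases hT a b m hADab (NAdj_symm hza) (NAdj_symm hzb) hc1 hc2 with h | h | h
            · exfalso; rw [hsymm] at h; rw [← hαdef] at h; linarith
            · exfalso; rw [← hβdef] at h; linarith
            · exact h
          have hcpos : 0 < α * β / (α + β) := div_pos (mul_pos hα hβ) hd
          apply hreduce (α * β / (α + β))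
          · rw [div_mul_eq_mul_div, div_eq_iff hd.ne']
            linear_combination α * heqz
          · rw [div_mul_eq_mul_div, div_eq_iff hd.ne']
            linear_combination β * heqz
          · exact Or.inr ⟨hwab, by linarith⟩
          · intro ya yb
            refine ⟨(α * ya + β * yb) / (α + β), ?_⟩
            field_simp
            ring
      · exact absurd hc2 hxmb
      · -- z rightmost : x a < x b < x m
        have key : (α + β) * (x a - x m) = β * (x a - x b) := by linear_combination heqz
        rcases lt_trichotomy β 0 with hβ | hβ | hβ
        · apply hdone
          nlinarith [key]
        · have hα0 : α = 0 := by
            rw [hβ] at heqz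
            rcases mul_eq_zero.mp (by linarith : α * (x a - x m) = 0) with h | h
            · exact h
            · exfalso; nlinarith
          have hwab : w a b < 0 := by
            rcases hT a m b (NAdj_symm hza) hADab hzb hxab hc2 with h | h | h
            · exact h
            · exfalso; rw [hsymm] at h; rw [← hβdef] at h; linarith
            · exfalso; rw [hsymm] at h; rw [← hαdef] at h; linarith
          apply hreduce 0
          · rw [hα0]; ring
          · rw [hβ]; ring
          · exact Or.inl ⟨hwab, by linarith⟩
          · intro ya yb; exact ⟨ya, by rw [hα0, hβ]; ring⟩
        · have hα : α < 0 := by nlinarith [heqz]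
          have hd : 0 < α + β := by nlinarith [key]
          have hwab : w a b < 0 := by
            rcases hT a m b (NAdj_symm hza) hADab hzb hxab hc2 with h | h | h
            · exact h
            · exfalso; rw [hsymm] at h; rw [← hβdef] at h; linarith
            · exfalso; rw [hsymm] at h; rw [← hαdef] at h; linarith
          have hcneg : α * β / (α + β) < 0 :=
            div_neg_of_neg_of_pos (mul_neg_of_neg_of_pos hα hβ) hd
          apply hreduce (α * β / (α + β))
          · rw [div_mul_eq_mul_div, div_eq_iff hd.ne']
            linear_combination α * heqz
          · rw [div_mul_eq_mul_div, div_eq_iff hd.ne']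
            linear_combination β * heqz
          · exact Or.inl ⟨hwab, by linarith⟩
          · intro ya yb
            refine ⟨(α * ya + β * yb) / (α + β), ?_⟩
            field_simp
            ring


end AuxComb

noncomputable section AuxAnalysis
open Classical

variable {ι : Type*} [Fintype ι] [DecidableEq ι]

/-- distance formula -/
lemma dist_formula (q : Conf ι) (i j : ι) :
    dist (pt q i) (pt q j)
      = Real.sqrt (∑ c : Fin 2, (q (i,c) - q (j,c)) * (q (i,c) - q (j,c))) := by
  rw [EuclideanSpace.dist_eq]
  congr 1
  apply Finset.sum_congr rfl
  intro c _
  rw [Real.dist_eq, sq_abs, sq]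
  rfl

lemma equilibrium (G : SimpleGraph ι) (f : ι → ι → ℝ → ℝ) (p : Conf ι)
    (hp : p ∈ configSpace G)
    (hcont : ∀ i j, G.Adj i j → ContinuousOn (f i j) (Set.Ioi 0))
    (hfs : ∀ i j, f i j = f j i)
    (hcrit : gradient (potential G f) p = 0) (m : ι) :
    ∑ j : ι, (if G.Adj m j then f m j (dist (pt p m) (pt p j)) else 0) * (p (m,0) - p (j,0)) = 0 := by
  set φ : ι → ι → Conf ι → ℝ :=
    fun i j q => ∑ c : Fin 2, (q (i,c) - q (j,c)) * (q (i,c) - q (j,c)) with hφdef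
  set D1 : ι → ι → (Conf ι →L[ℝ] ℝ) := fun i j => ∑ c : Fin 2,
    ((p (i,c) - p (j,c)) • ((EuclideanSpace.proj ((i,c) : ι × Fin 2) : Conf ι →L[ℝ] ℝ)
        - EuclideanSpace.proj ((j,c) : ι × Fin 2))
      + (p (i,c) - p (j,c)) • ((EuclideanSpace.proj ((i,c) : ι × Fin 2) : Conf ι →L[ℝ] ℝ)
        - EuclideanSpace.proj ((j,c) : ι × Fin 2))) with hD1def
  have hφd : ∀ i j, HasFDerivAt (φ i j) (D1 i j) p := by
    intro i j
    apply HasFDerivAt.fun_sum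
    intro c _
    have h1 := ((EuclideanSpace.proj ((i,c) : ι × Fin 2) : Conf ι →L[ℝ] ℝ)).hasFDerivAt
      (x := p) |>.sub ((EuclideanSpace.proj ((j,c) : ι × Fin 2) : Conf ι →L[ℝ] ℝ)).hasFDerivAt
    exact h1.mul h1
  set C : ι → ι → ℝ := fun i j =>
    (dist (pt p i) (pt p j) * f i j (dist (pt p i) (pt p j))) * (1/(2*Real.sqrt (φ i j p)))
    with hCdef
  set Dij : ι → ι → (Conf ι →L[ℝ] ℝ) := fun i j =>
    if G.Adj i j then C i j • D1 i j else 0 with hDijdef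
  have hterm : ∀ i j, HasFDerivAt
      (fun q => if G.Adj i j then ∫ s in (1:ℝ)..(dist (pt q i) (pt q j)), s * f i j s else 0)
      (Dij i j) p := by
    intro i j
    by_cases h : G.Adj i j
    · simp only [if_pos h, hDijdef]
      have hd0 : (0:ℝ) < dist (pt p i) (pt p j) := dist_pos.mpr (hp i j h)
      set d0 := dist (pt p i) (pt p j) with hd0def
      have hr0nn : 0 ≤ φ i j p := Finset.sum_nonneg (fun c _ => mul_self_nonneg _)
      have hsq : d0 = Real.sqrt (φ i j p) := dist_formula p i j
      have hr0pos : 0 < φ i j p := by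
        rcases lt_or_eq_of_le hr0nn with h' | h'
        · exact h'
        · exfalso; rw [← h', Real.sqrt_zero] at hsq; linarith
      -- FTC derivative
      have hcont' : ContinuousOn (fun s => s * f i j s) (Set.Ioi (0:ℝ)) :=
        continuousOn_id.mul (hcont i j h)
      have hII : IntervalIntegrable (fun s => s * f i j s) MeasureTheory.volume 1 d0 := by
        apply ContinuousOn.intervalIntegrable
        apply hcont'.mono
        intro t ht
        rcases Set.mem_uIcc.mp ht with ⟨h1, _⟩ | ⟨h1, _⟩ <;> simp only [Set.mem_Ioi] <;> linarith
      have hSM : StronglyMeasurableAtFilter (fun s => s * f i j s) (nhds d0) MeasureTheory.volume :=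
        hcont'.stronglyMeasurableAtFilter isOpen_Ioi d0 hd0
      have hCA : ContinuousAt (fun s => s * f i j s) d0 :=
        hcont'.continuousAt (isOpen_Ioi.mem_nhds hd0)
      have hgd : HasDerivAt (fun u => ∫ s in (1:ℝ)..u, s * f i j s) (d0 * f i j d0) d0 :=
        intervalIntegral.integral_hasDerivAt_right hII hSM hCA
      have hgd' : HasDerivAt (fun u => ∫ s in (1:ℝ)..u, s * f i j s) (d0 * f i j d0)
          (Real.sqrt (φ i j p)) := by rw [← hsq]; exact hgd
      have hsqrt : HasDerivAt Real.sqrt (1/(2*Real.sqrt (φ i j p))) (φ i j p) :=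
        Real.hasDerivAt_sqrt (ne_of_gt hr0pos)
      have hcomp1 : HasDerivAt (fun r => ∫ s in (1:ℝ)..(Real.sqrt r), s * f i j s)
          ((d0 * f i j d0) * (1/(2*Real.sqrt (φ i j p)))) (φ i j p) := by
        have := hgd'.comp (φ i j p) hsqrt
        exact this
      have hfin : HasFDerivAt (fun q => ∫ s in (1:ℝ)..(Real.sqrt (φ i j q)), s * f i j s)
          (C i j • D1 i j) p := by
        have := hcomp1.comp_hasFDerivAt p (hφd i j)
        exact this
      have hfuneq : (fun q : Conf ι => ∫ s in (1:ℝ)..(dist (pt q i) (pt q j)), s * f i j s)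
          = (fun q => ∫ s in (1:ℝ)..(Real.sqrt (φ i j q)), s * f i j s) := by
        funext q; rw [dist_formula q i j]
      rw [hfuneq]
      exact hfin
    · simp only [if_neg h, hDijdef]
      exact hasFDerivAt_const 0 p
  have htot : HasFDerivAt (potential G f) ((1/2 : ℝ) • ∑ i : ι, ∑ j : ι, Dij i j) p := by
    have hsum : HasFDerivAt (fun q : Conf ι => ∑ i : ι, ∑ j : ι,
        if G.Adj i j then ∫ s in (1:ℝ)..(dist (pt q i) (pt q j)), s * f i j s else 0)
        (∑ i : ι, ∑ j : ι, Dij i j) p :=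
      HasFDerivAt.fun_sum (fun i _ => HasFDerivAt.fun_sum (fun j _ => hterm i j))
    exact hsum.const_mul (1/2)
  have hfd0 : fderiv ℝ (potential G f) p = 0 := by
    unfold gradient at hcrit
    simpa using congrArg (InnerProductSpace.toDual ℝ (Conf ι)) hcrit
  have hD0 : ((1/2 : ℝ) • ∑ i : ι, ∑ j : ι, Dij i j) = 0 := by
    rw [← htot.fderiv]; exact hfd0
  -- evaluate at the test direction
  set u0 : Conf ι := EuclideanSpace.single ((m, (0 : Fin 2)) : ι × Fin 2) (1:ℝ) with hu0
  have hval : (((1/2 : ℝ) • ∑ i : ι, ∑ j : ι, Dij i j) : Conf ι →L[ℝ] ℝ) u0 = 0 := by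
    rw [hD0]; rfl
  have hu0val : ∀ (a : ι) (c : Fin 2), u0 ((a,c) : ι × Fin 2) = if a = m ∧ c = 0 then 1 else 0 := by
    intro a c
    rw [hu0, EuclideanSpace.single_apply]
    simp [Prod.ext_iff]
  have e1 : ∀ i j, (Dij i j) u0 =
      (if G.Adj i j then f i j (dist (pt p i) (pt p j)) else 0) * (p (i,0) - p (j,0))
        * ((if i = m then (1:ℝ) else 0) - (if j = m then (1:ℝ) else 0)) := by
    intro i j
    by_cases h : G.Adj i j
    · have hd0 : (0:ℝ) < dist (pt p i) (pt p j) := dist_pos.mpr (hp i j h)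
      have hsq : dist (pt p i) (pt p j) = Real.sqrt (φ i j p) := dist_formula p i j
      simp only [hDijdef, if_pos h, ContinuousLinearMap.smul_apply, hD1def,
        ContinuousLinearMap.sum_apply, ContinuousLinearMap.add_apply,
        ContinuousLinearMap.smul_apply, ContinuousLinearMap.sub_apply]
      have hproj : ∀ (a : ι) (c : Fin 2),
          (EuclideanSpace.proj ((a,c) : ι × Fin 2) : Conf ι →L[ℝ] ℝ) u0 = u0 ((a,c) : ι × Fin 2) := fun a c => rfl
      simp only [hproj, hu0val, Fin.sum_univ_two]
      have h10 : ((1 : Fin 2) = 0) = False := by simp [Fin.ext_iff]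
      simp only [h10, and_false, if_false, and_true]
      have hne : dist (pt p i) (pt p j) ≠ 0 := ne_of_gt hd0
      have hC : C i j = f i j (dist (pt p i) (pt p j)) / 2 := by
        simp only [hCdef]
        rw [← hsq]
        field_simp
      rw [hC]
      simp only [smul_eq_mul]
      ring
    · simp only [hDijdef, if_neg h, ContinuousLinearMap.zero_apply, zero_mul]
  -- now the double sum
  set A : ι → ι → ℝ := fun i j =>
    (if G.Adj i j then f i j (dist (pt p i) (pt p j)) else 0) * (p (i,0) - p (j,0)) with hAdef
  have hAanti : ∀ i j, A j i = - A i j := by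
    intro i j
    simp only [hAdef]
    by_cases h : G.Adj i j
    · rw [if_pos h, if_pos h.symm, hfs j i, dist_comm]
      ring
    · rw [if_neg h, if_neg (fun h' => h h'.symm)]
      ring
  have e2 : ∑ i : ι, ∑ j : ι, (Dij i j) u0 = 2 * ∑ j : ι, A m j := by
    have : ∀ i j, (Dij i j) u0 = (if i = m then A i j else 0) - (if j = m then A i j else 0) := by
      intro i j
      rw [e1 i j]
      have hfold : (if G.Adj i j then f i j (dist (pt p i) (pt p j)) else 0) * (p (i,0) - p (j,0))
          = A i j := rfl
      rw [hfold]
      by_cases h1 : i = m <;> by_cases h2 : j = m <;> simp [h1, h2] <;> ring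
    simp only [this]
    rw [Finset.sum_congr rfl (fun x _ => Finset.sum_sub_distrib _ _), Finset.sum_sub_distrib]
    have l1 : ∑ x : ι, ∑ x1 : ι, (if x = m then A x x1 else 0) = ∑ x1 : ι, A m x1 := by
      have : ∀ x : ι, (∑ x1 : ι, if x = m then A x x1 else 0)
          = if x = m then ∑ x1 : ι, A x x1 else 0 := by
        intro x
        by_cases hx : x = m <;> simp [hx]
      rw [Finset.sum_congr rfl (fun x _ => this x), Finset.sum_ite_eq' Finset.univ m
        (fun x => ∑ x1 : ι, A x x1), if_pos (Finset.mem_univ m)]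
    have l2 : ∑ x : ι, ∑ x1 : ι, (if x1 = m then A x x1 else 0) = ∑ x : ι, A x m := by
      apply Finset.sum_congr rfl
      intro x _
      rw [Finset.sum_ite_eq' Finset.univ m (fun x1 => A x x1), if_pos (Finset.mem_univ m)]
    rw [l1, l2]
    have l3 : ∑ x : ι, A x m = - ∑ x1 : ι, A m x1 := by
      rw [← Finset.sum_neg_distrib]
      exact Finset.sum_congr rfl (fun x _ => by rw [hAanti m x])
    rw [l3]
    ring
  simp only [ContinuousLinearMap.smul_apply, ContinuousLinearMap.sum_apply] at hval
  rw [e2] at hval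
  have : (1/2 : ℝ) * (2 * ∑ j : ι, A m j) = 0 := by
    rw [← hval]; simp [smul_eq_mul]
  linarith


end AuxAnalysis

/-- Proposition 4.6 of the paper. For a triangulated formation system
with at least three agents, if `p` is a critical point of the potential `Φ` which is a line
configuration lying on the first coordinate axis, then the matrix `F_p` has at least one
negative eigenvalue. -/
theorem stmt19 {ι : Type*} [Fintype ι] [DecidableEq ι] (G : SimpleGraph ι)
    (f : ι → ι → ℝ → ℝ) (dbar : ι → ι → ℝ) (hsys : IsTriFormation G f dbar)
    (hn : 3 ≤ Fintype.card ι)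
    (p : Conf ι) (hp : p ∈ configSpace G)
    (hcrit : gradient (potential G f) p = 0)
    (hline : ∀ i : ι, p (i, (1 : Fin 2)) = 0) :
    1 ≤ nNeg (Fmat G f p) := by
  classical
  set w : ι → ι → ℝ :=
    fun i j => if G.Adj i j then f i j (dist (pt p i) (pt p j)) else 0 with hwdef
  have hwval : ∀ i j, G.Adj i j → w i j = f i j (dist (pt p i) (pt p j)) := by
    intro i j h
    simp only [hwdef]
    rw [if_pos h]
  have hwzero : ∀ i j, ¬ G.Adj i j → w i j = 0 := by
    intro i j h
    simp only [hwdef]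
    rw [if_neg h]
  have hwsymm : ∀ i j, w i j = w j i := by
    intro i j
    by_cases h : G.Adj i j
    · rw [hwval i j h, hwval j i h.symm, hsys.fsymm i j, dist_comm]
    · rw [hwzero i j h, hwzero j i (fun h' => h h'.symm)]
  have hwdiag : ∀ i, w i i = 0 := fun i => hwzero i i (G.irrefl)
  -- distances along the line
  have hdistpos : ∀ i j, G.Adj i j → 0 < dist (pt p i) (pt p j) :=
    fun i j h => dist_pos.mpr (hp i j h)
  have hdistX : ∀ i j, dist (pt p i) (pt p j) = |p (i,0) - p (j,0)| := by
    intro i j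
    rw [dist_formula p i j, Fin.sum_univ_two, hline i, hline j]
    rw [show ((0:ℝ) - 0) * ((0:ℝ) - 0) = 0 by ring, add_zero, Real.sqrt_mul_self_eq_abs]
  have hptne : ∀ i j, G.Adj i j → p (i,0) ≠ p (j,0) := by
    intro i j h heq'
    apply hp i j h
    ext c
    fin_cases c
    · exact heq'
    · show p (i, 1) = p (j, 1)
      rw [hline i, hline j]
  -- sign conditions
  have hsgn : ∀ i j, G.Adj i j →
      (0 ≤ w i j → dbar i j ≤ dist (pt p i) (pt p j)) ∧
      (w i j ≤ 0 → dist (pt p i) (pt p j) ≤ dbar i j) := by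
    intro i j h
    have hm := hsys.mono i j h
    have hs := sign_mono (f i j) hm.contDiff hm.deriv_pos (dbar i j) (hsys.dpos i j h)
      (hsys.fzero i j h) (dist (pt p i) (pt p j)) (hdistpos i j h)
    rw [← hwval i j h] at hs
    exact hs
  -- triangle sign condition
  have hTG : ∀ i j k, G.Adj i j → G.Adj i k → G.Adj j k →
      p (i,0) < p (k,0) → p (k,0) < p (j,0) →
      (w i k < 0 ∨ w k j < 0 ∨ 0 < w i j) := by
    intro i j k h1 h2 h3 h4 h5
    by_contra hcon
    push_neg at hcon
    obtain ⟨g1, g2, g3⟩ := hcon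
    have e1 : dbar i k ≤ dist (pt p i) (pt p k) := (hsgn i k h2).1 g1
    have e2 : dbar k j ≤ dist (pt p k) (pt p j) := (hsgn k j h3.symm).1 g2
    have e3 : dist (pt p i) (pt p j) ≤ dbar i j := (hsgn i j h1).2 g3
    have d1 : dist (pt p i) (pt p k) = p (k,0) - p (i,0) := by
      rw [hdistX, abs_sub_comm, abs_of_pos (by linarith)]
    have d2 : dist (pt p k) (pt p j) = p (j,0) - p (k,0) := by
      rw [hdistX, abs_sub_comm, abs_of_pos (by linarith)]
    have d3 : dist (pt p i) (pt p j) = p (j,0) - p (i,0) := by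
      rw [hdistX, abs_sub_comm, abs_of_pos (by linarith)]
    have tri := (hsys.triangle i j k ⟨h1, h2, h3⟩).2.2
    have hds : dbar j k = dbar k j := hsys.dsymm j k
    rw [d1] at e1; rw [d2] at e2; rw [d3] at e3
    linarith
  -- equilibrium
  have hcont : ∀ i j, G.Adj i j → ContinuousOn (f i j) (Set.Ioi 0) :=
    fun i j h => (hsys.mono i j h).contDiff.continuousOn
  have heqm : ∀ m : ι, ∑ j : ι, w m j * (p (m,0) - p (j,0)) = 0 :=
    fun m => equilibrium G f p hp hcont hsys.fsymm hcrit m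
  -- Henneberg structure
  have hM3 : 3 ≤ Nat.card ι := by rw [Nat.card_eq_fintype_card]; exact hn
  obtain ⟨H⟩ : Nonempty (Henneberg G) := by
    rcases hsys.laman with h | h
    · omega
    · exact h
  set M := Nat.card ι with hMdef
  -- lifted data
  set v : ℕ → ι := fun l => if h : l < M then H.ord ⟨l, h⟩ else H.ord ⟨0, by omega⟩ with hvdef
  set P1 : ℕ → ℕ := fun l => if h : l < M then (H.par1 ⟨l, h⟩ : ℕ) else 0 with hP1def
  set P2 : ℕ → ℕ := fun l => if h : l < M then (H.par2 ⟨l, h⟩ : ℕ) else 0 with hP2def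
  have hvnat : ∀ (l : ℕ) (h : l < M), v l = H.ord ⟨l, h⟩ := by
    intro l h
    simp only [hvdef]
    rw [dif_pos h]
  have hP1nat : ∀ (l : ℕ) (h : l < M), P1 l = (H.par1 ⟨l, h⟩ : ℕ) := by
    intro l h
    simp only [hP1def]
    rw [dif_pos h]
  have hP2nat : ∀ (l : ℕ) (h : l < M), P2 l = (H.par2 ⟨l, h⟩ : ℕ) := by
    intro l h
    simp only [hP2def]
    rw [dif_pos h]
  have hordinj : ∀ (l l' : Fin M), H.ord l = H.ord l' → l = l' :=
    fun l l' h => H.ord.injective h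
  -- parent bounds in ℕ
  have hp1N : ∀ l, 2 ≤ l → l < M → P1 l < l := by
    intro l h2 hM'
    rw [hP1nat l hM']
    exact H.par1_lt ⟨l, hM'⟩ h2
  have hp2N : ∀ l, 2 ≤ l → l < M → P2 l < l := by
    intro l h2 hM'
    rw [hP2nat l hM']
    exact H.par2_lt ⟨l, hM'⟩ h2
  have hpneN : ∀ l, 2 ≤ l → l < M → P1 l ≠ P2 l := by
    intro l h2 hM' hcontra
    rw [hP1nat l hM', hP2nat l hM'] at hcontra
    exact H.par_ne ⟨l, hM'⟩ h2 (Fin.val_injective hcontra)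
  -- adjacency correspondence
  have hcorr : ∀ iN jN, iN < M → jN < M → (NAdj M P1 P2 iN jN ↔ G.Adj (v iN) (v jN)) := by
    intro iN jN hiN hjN
    constructor
    · intro hN
      apply (H.edge_iff (v iN) (v jN)).mpr
      rcases hN with (⟨e1, e2⟩ | ⟨e1, e2⟩) | ⟨l, hl2, hlM, hstep⟩
      · subst e1; subst e2
        left
        rw [hvnat 0 (by omega), hvnat 1 (by omega)]
      · subst e1; subst e2
        left
        rw [hvnat 1 (by omega), hvnat 0 (by omega)]
        exact Sym2.eq_swap
      · right
        refine ⟨⟨l, hlM⟩, hl2, ?_⟩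
        have hb1 : P1 l < M := by have := hp1N l hl2 hlM; omega
        have hb2 : P2 l < M := by have := hp2N l hl2 hlM; omega
        rcases hstep with (⟨e1, e2⟩ | ⟨e1, e2⟩) | (⟨e1, e2⟩ | ⟨e1, e2⟩)
        · left
          have hfin : (⟨P1 l, hb1⟩ : Fin M) = H.par1 ⟨l, hlM⟩ := Fin.ext (hP1nat l hlM)
          rw [e1, e2, hvnat (P1 l) hb1, hvnat l hlM, hfin]
        · left
          have hfin : (⟨P1 l, hb1⟩ : Fin M) = H.par1 ⟨l, hlM⟩ := Fin.ext (hP1nat l hlM)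
          rw [e1, e2, hvnat (P1 l) hb1, hvnat l hlM, hfin]
          exact Sym2.eq_swap
        · right
          have hfin : (⟨P2 l, hb2⟩ : Fin M) = H.par2 ⟨l, hlM⟩ := Fin.ext (hP2nat l hlM)
          rw [e1, e2, hvnat (P2 l) hb2, hvnat l hlM, hfin]
        · right
          have hfin : (⟨P2 l, hb2⟩ : Fin M) = H.par2 ⟨l, hlM⟩ := Fin.ext (hP2nat l hlM)
          rw [e1, e2, hvnat (P2 l) hb2, hvnat l hlM, hfin]
          exact Sym2.eq_swap
    · intro hA
      rcases (H.edge_iff (v iN) (v jN)).mp hA with h | ⟨l, hl2, h⟩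
      · left
        rw [hvnat iN hiN, hvnat jN hjN] at h
        rcases Sym2.eq_iff.mp h with ⟨e1, e2⟩ | ⟨e1, e2⟩
        · left
          exact ⟨congrArg Fin.val (hordinj _ _ e1), congrArg Fin.val (hordinj _ _ e2)⟩
        · right
          exact ⟨congrArg Fin.val (hordinj _ _ e1), congrArg Fin.val (hordinj _ _ e2)⟩
      · right
        refine ⟨(l : ℕ), hl2, l.isLt, ?_⟩
        rw [hvnat iN hiN, hvnat jN hjN] at h
        have hP1l : P1 (l : ℕ) = ((H.par1 l : Fin M) : ℕ) := by
          rw [hP1nat (l : ℕ) l.isLt]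
        have hP2l : P2 (l : ℕ) = ((H.par2 l : Fin M) : ℕ) := by
          rw [hP2nat (l : ℕ) l.isLt]
        rcases h with h | h
        · left
          rcases Sym2.eq_iff.mp h with ⟨e1, e2⟩ | ⟨e1, e2⟩
          · left
            constructor
            · rw [hP1l]; exact congrArg Fin.val (hordinj _ _ e1)
            · exact congrArg Fin.val (hordinj _ _ e2)
          · right
            constructor
            · exact congrArg Fin.val (hordinj _ _ e1)
            · rw [hP1l]; exact congrArg Fin.val (hordinj _ _ e2)
        · right
          rcases Sym2.eq_iff.mp h with ⟨e1, e2⟩ | ⟨e1, e2⟩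
          · left
            constructor
            · rw [hP2l]; exact congrArg Fin.val (hordinj _ _ e1)
            · exact congrArg Fin.val (hordinj _ _ e2)
          · right
            constructor
            · exact congrArg Fin.val (hordinj _ _ e1)
            · rw [hP2l]; exact congrArg Fin.val (hordinj _ _ e2)
  -- parent adjacency in ℕ world
  have hpadjN : ∀ l, 2 ≤ l → l < M → NAdj M P1 P2 (P1 l) (P2 l) := by
    intro l h2 hM'
    have hb1 : P1 l < M := by have := hp1N l h2 hM'; omega
    have hb2 : P2 l < M := by have := hp2N l h2 hM'; omega
    apply (hcorr (P1 l) (P2 l) hb1 hb2).mpr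
    have hfin1 : v (P1 l) = H.ord (H.par1 ⟨l, hM'⟩) := by
      rw [hvnat (P1 l) hb1]
      congr 1
      exact Fin.ext (hP1nat l hM')
    have hfin2 : v (P2 l) = H.ord (H.par2 ⟨l, hM'⟩) := by
      rw [hvnat (P2 l) hb2]
      congr 1
      exact Fin.ext (hP2nat l hM')
    rw [hfin1, hfin2]
    exact H.par_adj ⟨l, hM'⟩ h2
  -- reindexing of sums
  have hreindex : ∀ g : ι → ℝ, ∑ j : ι, g j = ∑ l ∈ Finset.range M, g (v l) := by
    intro g
    rw [← Fin.sum_univ_eq_sum_range (fun l => g (v l)) M]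
    rw [← Equiv.sum_comp H.ord g]
    apply Finset.sum_congr rfl
    intro l _
    congr 1
    rw [hvnat (l : ℕ) l.isLt]
  -- existence of a triangle (for the all-zero case)
  have htri : ∃ u t s : ι, G.Adj u t ∧ G.Adj u s ∧ G.Adj t s := by
    have h2M : 2 < M := by omega
    set l2 : Fin M := ⟨2, h2M⟩ with hl2def
    have h22 : 2 ≤ (l2 : ℕ) := le_refl 2
    refine ⟨H.ord (H.par1 l2), H.ord (H.par2 l2), H.ord l2, H.par_adj l2 h22, ?_, ?_⟩
    · exact (H.edge_iff _ _).mpr (Or.inr ⟨l2, h22, Or.inl rfl⟩)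
    · exact (H.edge_iff _ _).mpr (Or.inr ⟨l2, h22, Or.inr rfl⟩)
  -- sorted triangle
  have hsort : ∃ i k j : ι, G.Adj i j ∧ G.Adj i k ∧ G.Adj j k ∧
      p (i,0) < p (k,0) ∧ p (k,0) < p (j,0) := by
    obtain ⟨u, t, s, h1, h2, h3⟩ := htri
    have n1 := hptne u t h1
    have n2 := hptne u s h2
    have n3 := hptne t s h3
    rcases lt_trichotomy (p (u,0)) (p (t,0)) with c1 | c1 | c1
    · rcases lt_trichotomy (p (t,0)) (p (s,0)) with c2 | c2 | c2
      · exact ⟨u, t, s, h2, h1, h3.symm, c1, c2⟩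
      · exact absurd c2 n3
      · rcases lt_trichotomy (p (u,0)) (p (s,0)) with c3 | c3 | c3
        · exact ⟨u, s, t, h1, h2, h3, c3, c2⟩
        · exact absurd c3 n2
        · exact ⟨s, u, t, h3.symm, h2.symm, h1.symm, c3, c1⟩
    · exact absurd c1 n1
    · rcases lt_trichotomy (p (u,0)) (p (s,0)) with c2 | c2 | c2
      · exact ⟨t, u, s, h3, h1.symm, h2.symm, c1, c2⟩
      · exact absurd c2 n2
      · rcases lt_trichotomy (p (t,0)) (p (s,0)) with c3 | c3 | c3
        · exact ⟨t, s, u, h1.symm, h3, h2, c3, c2⟩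
        · exact absurd c3 n3
        · exact ⟨s, t, u, h2.symm, h3.symm, h1, c3, c1⟩
  -- rule out the all-zero case
  by_cases hallz : ∀ i j : ι, w i j = 0
  · exfalso
    obtain ⟨i, k, j, a1, a2, a3, o1, o2⟩ := hsort
    rcases hTG i j k a1 a2 a3 o1 o2 with h | h | h
    · rw [hallz i k] at h; exact absurd h (lt_irrefl 0)
    · rw [hallz k j] at h; exact absurd h (lt_irrefl 0)
    · rw [hallz i j] at h; exact absurd h (lt_irrefl 0)
  push_neg at hallz
  obtain ⟨i0, j0, hw0⟩ := hallz
  -- lifted configuration and weights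
  set X' : ℕ → ℝ := fun l => p (v l, 0) with hX'def
  set W' : ℕ → ℕ → ℝ := fun l l' => w (v l) (v l') with hW'def
  have hW'symm : ∀ l l', W' l l' = W' l' l := fun l l' => hwsymm _ _
  have hW'supp : ∀ l l', l < M → l' < M → ¬ NAdj M P1 P2 l l' → W' l l' = 0 :=
    fun l l' hl hl' hN => hwzero _ _ (fun hA => hN ((hcorr l l' hl hl').mpr hA))
  have hW'x : ∀ l l', NAdj M P1 P2 l l' → X' l ≠ X' l' := by
    intro l l' hN
    have hb := NAdj_lt (show 2 ≤ M by omega) hp1N hp2N hN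
    exact hptne _ _ ((hcorr l l' hb.1 hb.2).mp hN)
  have heqN : ∀ l, l < M → ∑ l' ∈ Finset.range M, W' l l' * (X' l' - X' l) = 0 := by
    intro l hl
    have h0 := heqm (v l)
    rw [hreindex (fun j => w (v l) j * (p (v l, 0) - p (j, 0)))] at h0
    have hflip : ∑ l' ∈ Finset.range M, W' l l' * (X' l' - X' l)
        = - ∑ l' ∈ Finset.range M, w (v l) (v l') * (p (v l, 0) - p (v l', 0)) := by
      rw [← Finset.sum_neg_distrib]
      apply Finset.sum_congr rfl
      intro l' _
      simp only [hW'def, hX'def]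
      ring
    rw [hflip, h0, neg_zero]
  have hTN : ∀ a b c', NAdj M P1 P2 a b → NAdj M P1 P2 a c' → NAdj M P1 P2 b c' →
      X' a < X' c' → X' c' < X' b → (W' a c' < 0 ∨ W' c' b < 0 ∨ 0 < W' a b) := by
    intro a b c' h1 h2 h3 h4 h5
    have b1 := NAdj_lt (show 2 ≤ M by omega) hp1N hp2N h1
    have b2 := NAdj_lt (show 2 ≤ M by omega) hp1N hp2N h2
    exact hTG (v a) (v b) (v c') ((hcorr _ _ b1.1 b1.2).mp h1) ((hcorr _ _ b2.1 b2.2).mp h2)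
      ((hcorr _ _ b1.2 b2.2).mp h3) h4 h5
  have hnzN : ∃ a b, a < M ∧ b < M ∧ W' a b ≠ 0 := by
    refine ⟨((H.ord.symm i0 : Fin M) : ℕ), ((H.ord.symm j0 : Fin M) : ℕ),
      (H.ord.symm i0).isLt, (H.ord.symm j0).isLt, ?_⟩
    have hv1 : v ((H.ord.symm i0 : Fin M) : ℕ) = i0 := by
      rw [hvnat _ (H.ord.symm i0).isLt]
      rw [show (⟨((H.ord.symm i0 : Fin M) : ℕ), (H.ord.symm i0).isLt⟩ : Fin M)
        = H.ord.symm i0 from Fin.ext rfl]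
      exact H.ord.apply_symm_apply i0
    have hv2 : v ((H.ord.symm j0 : Fin M) : ℕ) = j0 := by
      rw [hvnat _ (H.ord.symm j0).isLt]
      rw [show (⟨((H.ord.symm j0 : Fin M) : ℕ), (H.ord.symm j0).isLt⟩ : Fin M)
        = H.ord.symm j0 from Fin.ext rfl]
      exact H.ord.apply_symm_apply j0
    simp only [hW'def]
    rw [hv1, hv2]
    exact hw0
  obtain ⟨y, hy⟩ := lemC M (show 2 ≤ M by omega) P1 P2 hp1N hp2N hpneN hpadjN X' W'
    hW'symm hW'supp hW'x heqN hTN hnzN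
  -- transfer back to ι
  set Y : ι → ℝ := fun i => y ((H.ord.symm i : Fin M) : ℕ) with hYdef
  have hYv : ∀ l, l < M → Y (v l) = y l := by
    intro l hl
    simp only [hYdef]
    congr 1
    rw [hvnat l hl, H.ord.symm_apply_apply]
  have hsum : ∑ i : ι, ∑ j : ι, w i j * (Y i - Y j)^2 < 0 := by
    rw [hreindex (fun i => ∑ j : ι, w i j * (Y i - Y j)^2)]
    have hinner : ∀ l ∈ Finset.range M, (∑ j : ι, w (v l) j * (Y (v l) - Y j)^2)
        = ∑ l' ∈ Finset.range M, W' l l' * (y l - y l')^2 := by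
      intro l hl
      rw [hreindex (fun j => w (v l) j * (Y (v l) - Y j)^2)]
      apply Finset.sum_congr rfl
      intro l' hl'
      rw [hYv l (Finset.mem_range.mp hl), hYv l' (Finset.mem_range.mp hl')]
    rw [Finset.sum_congr rfl hinner]
    exact hy
  -- relate to Fmat
  have hFeq : Fmat G f p = Matrix.of (fun i j : ι =>
      if i = j then ∑ k ∈ Finset.univ.erase i, w i k else -(w i j)) := by
    ext i j
    simp only [Fmat, Matrix.of_apply]
    by_cases h : i = j
    · rw [if_pos h, if_pos h]
    · rw [if_neg h, if_neg h]
      by_cases hA : G.Adj i j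
      · rw [if_pos hA, hwval i j hA]
      · rw [if_neg hA, hwzero i j hA, neg_zero]
  have hherm : (Fmat G f p).IsHermitian := by
    rw [hFeq]
    unfold Matrix.IsHermitian
    ext i j
    simp only [Matrix.conjTranspose_apply, Matrix.of_apply, star_trivial]
    by_cases h : i = j
    · subst h
      rfl
    · rw [if_neg (fun hh => h hh.symm), if_neg h, hwsymm j i]
  have hquad := lap_quadform w hwsymm hwdiag Y
  rw [← hFeq] at hquad
  have hdot : dotProduct Y ((Fmat G f p).mulVec Y) < 0 := by linarith [hquad, hsum]
  exact one_le_nNeg (Fmat G f p) hherm Y hdot
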